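/- Let G be a finite group and let I be a structure subgroup with δ_G(I) = k ≥ 1. Then every structure subgroup J that is an option of X_I satisfies δ_G(J) ∈ {k−1, k}, and there exists an option X_J of X_I with δ_G(J) = k−1. -/
import Mathlib


/-- ⌈P⌉: the intersection of all maximal subgroups of `G` containing `P`
(equal to `G`, i.e. `⊤`, if no maximal subgroup contains `P`). -/
def ceilSet {G : Type*} [Group G] (P : Set G) : Subgroup G :=
  sInf {M : Subgroup G | IsCoatom M ∧ P ⊆ (M : Set G)}

/-- The deficiency of a subset `S` of a finite group `G`: the minimum size of a
subset `Q` of `G` such that `S ∪ Q` generates `G`. -/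
noncomputable def deficiency {G : Type*} [Group G] [Fintype G] (S : Set G) : ℕ :=
  sInf {n : ℕ | ∃ Q : Finset G, Q.card = n ∧ Subgroup.closure (S ∪ (Q : Set G)) = ⊤}

/-- The structure class `X_J` is an option of the structure class `X_I`. -/
def IsStructOption {G : Type*} [Group G] (I J : Subgroup G) : Prop :=
  ∃ g ∉ I, ceilSet ((I : Set G) ∪ {g}) = J

section Aux

variable {G : Type*} [Group G]

lemma subset_ceilSet (S : Set G) : S ⊆ (ceilSet S : Set G) :=
  fun x hx => Subgroup.mem_sInf.2 fun _ hM => hM.2 hx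

lemma ceilSet_closure_top_iff [Fintype G] (S T : Set G) :
    Subgroup.closure ((ceilSet S : Set G) ∪ T) = ⊤ ↔ Subgroup.closure (S ∪ T) = ⊤ := by
  constructor
  · intro h
    by_contra hne
    obtain ⟨M, hM, hle⟩ := (eq_top_or_exists_le_coatom (Subgroup.closure (S ∪ T))).resolve_left hne
    have hST : S ∪ T ⊆ (M : Set G) :=
      (Subgroup.subset_closure).trans hle
    have hS : S ⊆ (M : Set G) := (Set.subset_union_left).trans hST
    have hT : T ⊆ (M : Set G) := (Set.subset_union_right).trans hST
    have hceil : ceilSet S ≤ M := sInf_le ⟨hM, hS⟩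
    have : Subgroup.closure ((ceilSet S : Set G) ∪ T) ≤ M :=
      Subgroup.closure_le M |>.2 (Set.union_subset hceil hT)
    rw [h] at this
    exact hM.1 (top_le_iff.1 this)
  · intro h
    have : Subgroup.closure (S ∪ T) ≤ Subgroup.closure ((ceilSet S : Set G) ∪ T) :=
      Subgroup.closure_mono (Set.union_subset_union_left _ (subset_ceilSet S))
    rw [h] at this
    exact top_le_iff.1 this

variable [Fintype G]

lemma deficiency_set_nonempty (S : Set G) :
    {n : ℕ | ∃ Q : Finset G, Q.card = n ∧ Subgroup.closure (S ∪ (Q : Set G)) = ⊤}.Nonempty :=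
  ⟨(Finset.univ : Finset G).card, Finset.univ, rfl, by
    rw [Finset.coe_univ, Set.union_univ, Subgroup.closure_univ]⟩

lemma deficiency_mem (S : Set G) :
    ∃ Q : Finset G, Q.card = deficiency S ∧ Subgroup.closure (S ∪ (Q : Set G)) = ⊤ :=
  Nat.sInf_mem (deficiency_set_nonempty S)

lemma deficiency_le (S : Set G) (Q : Finset G) (h : Subgroup.closure (S ∪ (Q : Set G)) = ⊤) :
    deficiency S ≤ Q.card := Nat.sInf_le ⟨Q, rfl, h⟩

lemma deficiency_anti {S T : Set G} (h : S ⊆ T) : deficiency T ≤ deficiency S := by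
  obtain ⟨Q, hc, hQ⟩ := deficiency_mem S
  have : Subgroup.closure (T ∪ (Q : Set G)) = ⊤ := by
    have := Subgroup.closure_mono (Set.union_subset_union_left (Q : Set G) h)
    rw [hQ] at this
    exact top_le_iff.1 this
  calc deficiency T ≤ Q.card := deficiency_le T Q this
    _ = deficiency S := hc

lemma deficiency_ceilSet (S : Set G) : deficiency ((ceilSet S : Set G)) = deficiency S := by
  unfold deficiency
  congr 1
  ext n
  exact ⟨fun ⟨Q, h1, h2⟩ => ⟨Q, h1, (ceilSet_closure_top_iff S _).1 h2⟩,
    fun ⟨Q, h1, h2⟩ => ⟨Q, h1, (ceilSet_closure_top_iff S _).2 h2⟩⟩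

lemma deficiency_le_insert_add_one (S : Set G) (g : G) :
    deficiency S ≤ deficiency (S ∪ {g}) + 1 := by
  classical
  obtain ⟨Q, hc, hQ⟩ := deficiency_mem (S ∪ {g})
  have hset : (S ∪ (↑(insert g Q) : Set G)) = (S ∪ {g}) ∪ (Q : Set G) := by
    ext x
    simp only [Finset.coe_insert, Set.mem_union, Set.mem_insert_iff, Finset.mem_coe,
      Set.mem_singleton_iff]
    constructor
    · rintro (h | (h | h))
      · exact Or.inl (Or.inl h)
      · exact Or.inl (Or.inr h)
      · exact Or.inr h
    · rintro ((h | h) | h)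
      · exact Or.inl h
      · exact Or.inr (Or.inl h)
      · exact Or.inr (Or.inr h)
  have : Subgroup.closure (S ∪ (↑(insert g Q) : Set G)) = ⊤ := by rw [hset]; exact hQ
  calc deficiency S ≤ (insert g Q).card := deficiency_le S _ this
    _ ≤ Q.card + 1 := Finset.card_insert_le g Q
    _ = deficiency (S ∪ {g}) + 1 := by rw [hc]

end Aux

/-- If `X_I` has deficiency `k ≥ 1`, then every option of `X_I` has deficiency
`k-1` or `k`, and some option has deficiency `k-1`. -/
theorem options_deficiency {G : Type*} [Group G] [Fintype G]
    (I : Subgroup G) (hI : ceilSet (I : Set G) = I)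
    (k : ℕ) (hk : 1 ≤ k) (hdef : deficiency (I : Set G) = k) :
    (∀ J : Subgroup G, IsStructOption I J →
      deficiency (J : Set G) = k - 1 ∨ deficiency (J : Set G) = k) ∧
    (∃ J : Subgroup G, IsStructOption I J ∧ deficiency (J : Set G) = k - 1) := by
  classical
  have key : ∀ g : G, deficiency ((I : Set G) ∪ {g}) = k - 1 ∨ deficiency ((I : Set G) ∪ {g}) = k := by
    intro g
    have h1 : deficiency ((I : Set G) ∪ {g}) ≤ k := by
      rw [← hdef]; exact deficiency_anti Set.subset_union_left
    have h2 : k ≤ deficiency ((I : Set G) ∪ {g}) + 1 := by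
      rw [← hdef]; exact deficiency_le_insert_add_one _ g
    omega
  constructor
  · rintro J ⟨g, hg, rfl⟩
    rw [deficiency_ceilSet]
    exact key g
  · obtain ⟨Q, hc, hQ⟩ := deficiency_mem (I : Set G)
    rw [hdef] at hc
    have hQne : Q.Nonempty := Finset.card_pos.1 (by omega)
    obtain ⟨g, hgQ⟩ := hQne
    have hg : g ∉ I := by
      intro hgI
      have hset : ((I : Set G) ∪ (Q : Set G)) = (I : Set G) ∪ (↑(Q.erase g) : Set G) := by
        ext x
        simp only [Set.mem_union, SetLike.mem_coe, Finset.mem_coe, Finset.mem_erase]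
        constructor
        · rintro (h | h)
          · exact Or.inl h
          · by_cases hx : x = g
            · exact Or.inl (hx ▸ hgI)
            · exact Or.inr ⟨hx, h⟩
        · rintro (h | ⟨_, h⟩)
          · exact Or.inl h
          · exact Or.inr h
      have hle : deficiency (I : Set G) ≤ (Q.erase g).card :=
        deficiency_le _ _ (by rw [← hset]; exact hQ)
      rw [hdef, Finset.card_erase_of_mem hgQ, hc] at hle
      omega
    refine ⟨ceilSet ((I : Set G) ∪ {g}), ⟨g, hg, rfl⟩, ?_⟩
    rw [deficiency_ceilSet]
    have hle : deficiency ((I : Set G) ∪ {g}) ≤ k - 1 := by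
      have hset : (((I : Set G) ∪ {g}) ∪ (↑(Q.erase g) : Set G)) = (I : Set G) ∪ (Q : Set G) := by
        ext x
        simp only [Set.mem_union, SetLike.mem_coe, Finset.mem_coe, Finset.mem_erase,
          Set.mem_singleton_iff]
        constructor
        · rintro ((h | h) | ⟨_, h⟩)
          · exact Or.inl h
          · exact Or.inr (h ▸ hgQ)
          · exact Or.inr h
        · rintro (h | h)
          · exact Or.inl (Or.inl h)
          · by_cases hx : x = g
            · exact Or.inl (Or.inr hx)
            · exact Or.inr ⟨hx, h⟩
      have := deficiency_le ((I : Set G) ∪ {g}) (Q.erase g) (by rw [hset]; exact hQ)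
      rw [Finset.card_erase_of_mem hgQ, hc] at this
      exact this
    rcases key g with h | h
    · exact h
    · omega
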